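/- For all p ≥ 1 and β > 0 with p ≤ 2β, B(p,β)^{1/p} ≥ K₋ · β, where K₋ = (2π)^{-1/2} · exp(−1/(2e) + 1/3) ≈ 0.65. -/

import Mathlib

open Real

noncomputable def Bell (p β : ℝ) : ℝ :=
  Real.exp (-β) * ∑' k : ℕ, (k : ℝ) ^ p * β ^ k / (Nat.factorial k)

lemma aux_summable {p x : ℝ} (hp : 0 ≤ p) (hx : 0 ≤ x) :
    Summable fun k : ℕ => (k : ℝ) ^ p * x ^ k / (Nat.factorial k) := by
  apply Summable.of_nonneg_of_le (f := fun k : ℕ => (2 ^ p * x) ^ k / (Nat.factorial k))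
  · intro k
    positivity
  · intro k
    have hk2 : (k : ℝ) ≤ 2 ^ k := by exact_mod_cast (Nat.lt_two_pow_self (n := k)).le
    have h1 : (k : ℝ) ^ p ≤ ((2 : ℝ) ^ k) ^ p :=
      Real.rpow_le_rpow (Nat.cast_nonneg k) hk2 hp
    have h2 : ((2 : ℝ) ^ k) ^ p = ((2 : ℝ) ^ p) ^ k := by
      rw [← Real.rpow_natCast (2 : ℝ) k, ← Real.rpow_natCast ((2:ℝ) ^ p) k,
        ← Real.rpow_mul (by norm_num), ← Real.rpow_mul (by norm_num), mul_comm]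
    rw [mul_pow]
    have hxk : (0:ℝ) ≤ x ^ k := by positivity
    have : (k : ℝ) ^ p * x ^ k ≤ ((2:ℝ) ^ p) ^ k * x ^ k := by
      apply mul_le_mul_of_nonneg_right _ hxk
      rw [← h2]; exact h1
    exact div_le_div_of_nonneg_right this (by positivity) |>.trans_eq rfl
  · exact Real.summable_pow_div_factorial _

lemma exp_tsum (x : ℝ) : ∑' k : ℕ, x ^ k / (Nat.factorial k) = Real.exp x := by
  rw [Real.exp_eq_exp_ℝ, NormedSpace.exp_eq_tsum_div]

lemma mul_exp_tsum (x : ℝ) (hx : 0 ≤ x) :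
    ∑' k : ℕ, (k : ℝ) * x ^ k / (Nat.factorial k) = x * Real.exp x := by
  have hs : Summable fun k : ℕ => (k : ℝ) * x ^ k / (Nat.factorial k) := by
    have := aux_summable (p := 1) (x := x) zero_le_one hx
    simpa [Real.rpow_one] using this
  rw [Summable.tsum_eq_zero_add hs]
  have h0 : ((0:ℕ) : ℝ) * x ^ 0 / (Nat.factorial 0) = 0 := by simp
  rw [h0, zero_add]
  have heq : ∀ k : ℕ, ((k+1 : ℕ) : ℝ) * x ^ (k+1) / (Nat.factorial (k+1))
      = x * (x ^ k / (Nat.factorial k)) := by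
    intro k
    rw [Nat.factorial_succ]
    have hk : ((k:ℝ) + 1) ≠ 0 := by positivity
    have hf : ((Nat.factorial k : ℝ)) ≠ 0 := by
      exact_mod_cast Nat.factorial_ne_zero k
    push_cast
    field_simp
    ring
  rw [tsum_congr heq, tsum_mul_left, exp_tsum]

theorem bell_ge (p β : ℝ) (hp : 1 ≤ p) (hβ : 0 < β) : β ^ p ≤ Bell p β := by
  have hp0 : (0:ℝ) ≤ p := by linarith
  have hβ0 : (0:ℝ) ≤ β := hβ.le
  have hsf : Summable fun k : ℕ => (k : ℝ) ^ p * β ^ k / (Nat.factorial k) :=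
    aux_summable hp0 hβ0
  have hs0 : Summable fun k : ℕ => β ^ k / (Nat.factorial k) :=
    Real.summable_pow_div_factorial β
  have hs1 : Summable fun k : ℕ => (k : ℝ) * β ^ k / (Nat.factorial k) := by
    have := aux_summable (p := 1) (x := β) zero_le_one hβ0
    simpa [Real.rpow_one] using this
  set c1 : ℝ := β ^ p * (1 - p) with hc1
  set c2 : ℝ := p * β ^ (p - 1) with hc2
  have hsg : Summable fun k : ℕ =>
      c1 * (β ^ k / (Nat.factorial k)) + c2 * ((k : ℝ) * β ^ k / (Nat.factorial k)) :=
    (hs0.mul_left c1).add (hs1.mul_left c2)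
  have hpt : ∀ k : ℕ,
      c1 * (β ^ k / (Nat.factorial k)) + c2 * ((k : ℝ) * β ^ k / (Nat.factorial k))
      ≤ (k : ℝ) ^ p * β ^ k / (Nat.factorial k) := by
    intro k
    have hkey : c1 + c2 * (k : ℝ) ≤ (k : ℝ) ^ p := by
      have hs : -1 ≤ (k : ℝ) / β - 1 := by
        have : (0:ℝ) ≤ (k:ℝ)/β := by positivity
        linarith
      have hber := one_add_mul_self_le_rpow_one_add hs hp
      rw [add_sub_cancel] at hber
      have hβp : (0:ℝ) < β ^ p := Real.rpow_pos_of_pos hβ p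
      have hmul := mul_le_mul_of_nonneg_right hber hβp.le
      have hdiv : ((k : ℝ) / β) ^ p * β ^ p = (k : ℝ) ^ p := by
        rw [Real.div_rpow (Nat.cast_nonneg k) hβ0]
        field_simp
      rw [hdiv] at hmul
      have hpm1 : β ^ (p - 1) = β ^ p / β := Real.rpow_sub_one hβ.ne' p
      calc c1 + c2 * (k:ℝ) = (1 + p * ((k:ℝ)/β - 1)) * β ^ p := by
            rw [hc1, hc2, hpm1]; field_simp; ring
        _ ≤ (k : ℝ) ^ p := hmul
    have hnn : (0:ℝ) ≤ β ^ k / (Nat.factorial k) := by positivity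
    calc c1 * (β ^ k / (Nat.factorial k)) + c2 * ((k : ℝ) * β ^ k / (Nat.factorial k))
        = (c1 + c2 * (k:ℝ)) * (β ^ k / (Nat.factorial k)) := by ring
      _ ≤ (k : ℝ) ^ p * (β ^ k / (Nat.factorial k)) :=
          mul_le_mul_of_nonneg_right hkey hnn
      _ = (k : ℝ) ^ p * β ^ k / (Nat.factorial k) := by ring
  have hle := Summable.tsum_le_tsum hpt hsg hsf
  have htg : (∑' k : ℕ, (c1 * (β ^ k / (Nat.factorial k))
      + c2 * ((k : ℝ) * β ^ k / (Nat.factorial k)))) = β ^ p * Real.exp β := by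
    rw [Summable.tsum_add (hs0.mul_left c1) (hs1.mul_left c2), tsum_mul_left, tsum_mul_left,
      exp_tsum, mul_exp_tsum β hβ0]
    have hpm1 : β ^ (p - 1) = β ^ p / β := Real.rpow_sub_one hβ.ne' p
    rw [hc1, hc2, hpm1]
    field_simp
    ring
  rw [htg] at hle
  unfold Bell
  rw [Real.exp_neg]
  calc β ^ p = (Real.exp β)⁻¹ * (β ^ p * Real.exp β) := by
        field_simp
    _ ≤ (Real.exp β)⁻¹ * ∑' k : ℕ, (k : ℝ) ^ p * β ^ k / (Nat.factorial k) := by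
        apply mul_le_mul_of_nonneg_left hle
        positivity

theorem bell_lower_Kminus (p β : ℝ) (hp : 1 ≤ p) (hβ : 0 < β) (hpβ : p ≤ 2 * β) :
    (2 * Real.pi) ^ (-(1 : ℝ) / 2) *
      Real.exp (-1 / (2 * Real.exp 1) + 1 / 3) * β ≤ Bell p β ^ (1 / p) := by
  have hp0 : (0:ℝ) < p := by linarith
  have hβp : (0:ℝ) < β ^ p := Real.rpow_pos_of_pos hβ p
  have h1 : β ≤ Bell p β ^ (1 / p) := by
    have h := bell_ge p β hp hβ
    have := Real.rpow_le_rpow hβp.le h (by positivity : (0:ℝ) ≤ 1/p)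
    rwa [← Real.rpow_mul hβ.le, mul_one_div, div_self hp0.ne', Real.rpow_one] at this
  have hK : (2 * Real.pi) ^ (-(1 : ℝ) / 2) *
      Real.exp (-1 / (2 * Real.exp 1) + 1 / 3) ≤ 1 := by
    have hE : Real.exp (-1 / (2 * Real.exp 1) + 1 / 3) ≤ 2 := by
      have h13 : Real.exp (-1 / (2 * Real.exp 1) + 1 / 3) ≤ Real.exp (1/3) := by
        apply Real.exp_le_exp.mpr
        have : (0:ℝ) < Real.exp 1 := Real.exp_pos 1
        have : -1 / (2 * Real.exp 1) ≤ 0 := by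
          apply div_nonpos_of_nonpos_of_nonneg <;> linarith
        linarith
      have hcube : Real.exp (1/3) ^ (3:ℕ) = Real.exp 1 := by
        rw [← Real.exp_nat_mul]; norm_num
      have he1 : Real.exp 1 < 8 := by
        have := Real.exp_one_lt_d9; linarith
      have hpos : (0:ℝ) < Real.exp (1/3) := Real.exp_pos _
      have h2 : Real.exp (1/3) ≤ 2 := by
        nlinarith [hcube, he1, hpos, sq_nonneg (Real.exp (1/3)), sq_nonneg (Real.exp (1/3) - 2)]
      linarith
    have hpow : (2 * Real.pi) ^ (-(1 : ℝ) / 2) ≤ 1/2 := by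
      have h4 : (4:ℝ) ≤ 2 * Real.pi := by
        have := Real.pi_gt_three; linarith
      have h2 : (2:ℝ) = (4:ℝ) ^ ((1:ℝ)/2) := by
        rw [show (4:ℝ) = 2^(2:ℕ) by norm_num, ← Real.rpow_natCast (2:ℝ) 2,
          ← Real.rpow_mul (by norm_num)]
        norm_num
      have hmono : (4:ℝ) ^ ((1:ℝ)/2) ≤ (2 * Real.pi) ^ ((1:ℝ)/2) :=
        Real.rpow_le_rpow (by norm_num) h4 (by norm_num)
      have hppos : (0:ℝ) < (2 * Real.pi) ^ ((1:ℝ)/2) :=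
        Real.rpow_pos_of_pos (by positivity) _
      rw [show (-(1:ℝ)/2) = -((1:ℝ)/2) by ring, Real.rpow_neg (by positivity)]
      rw [inv_le_comm₀ hppos (by norm_num)]
      calc (1/2 : ℝ)⁻¹ = 2 := by norm_num
        _ = (4:ℝ) ^ ((1:ℝ)/2) := h2
        _ ≤ (2 * Real.pi) ^ ((1:ℝ)/2) := hmono
    have hEpos : (0:ℝ) < Real.exp (-1 / (2 * Real.exp 1) + 1 / 3) := Real.exp_pos _
    have hKpos : (0:ℝ) ≤ (2 * Real.pi) ^ (-(1 : ℝ) / 2) :=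
      (Real.rpow_pos_of_pos (by positivity) _).le
    nlinarith
  calc (2 * Real.pi) ^ (-(1 : ℝ) / 2) * Real.exp (-1 / (2 * Real.exp 1) + 1 / 3) * β
      ≤ 1 * β := mul_le_mul_of_nonneg_right hK hβ.le
    _ = β := one_mul β
    _ ≤ Bell p β ^ (1 / p) := h1
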